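/- (Quantitative core of Lemma 5.1 and of the proofs of Corollaries 2 and 4: lower bound on the size of the most informative subgraph.) Let V be a finite set with |V| = n ≥ 2, let p_{ij} (i ≠ j ∈ V, symmetric) satisfy 0 < p_min ≤ p_{ij} ≤ p_max, let C ⊆ V with |C| = r, where 2 ≤ r < n, and set E_0[e(D)] = Σ_{i<j∈D} p_{ij} for D ⊆ V. Let m be a real number with 1 ≤ m < n such that (m − 1)·p_max·log(n/r) < (r − 1)·p_min·log(n/m). Then every nonempty D* ⊆ C maximizing the function D ↦ E_0[e(D)]/(|D|·log(n/|D|)) over nonempty subsets D of C satisfies |D*| > m. (Taking rank-1 probabilities p_{ij} = θ_iθ_j and m = r^{1/3} recovers Lemma 5.1.) -/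
import Mathlib


open Finset

namespace MostInformativeSubgraph

/-- `E₀[e(D)] = Σ_{i<j ∈ D} p_{ij}`, written for a symmetric `p` on an arbitrary finite
vertex set as half the sum over ordered pairs of distinct vertices of `D`. -/
noncomputable def expCount {V : Type*} [DecidableEq V] (p : V → V → ℝ) (D : Finset V) : ℝ :=
  (∑ q ∈ D.offDiag, p q.1 q.2) / 2

/-- **Quantitative core of Lemma 5.1 / Corollaries 2 and 4.** If
`(m-1)·p_max·log(n/r) < (r-1)·p_min·log(n/m)`, then every nonempty `D* ⊆ C` maximizing
`D ↦ E₀[e(D)]/(|D| log(n/|D|))` over nonempty subsets of `C` satisfies `|D*| > m`. -/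
theorem card_maximizer_gt {V : Type*} [Fintype V] [DecidableEq V] (n : ℕ)
    (hn : Fintype.card V = n) (hn2 : 2 ≤ n)
    (p : V → V → ℝ) (pmin pmax : ℝ)
    (hsymm : ∀ i j : V, p i j = p j i)
    (hbound : ∀ i j : V, i ≠ j → pmin ≤ p i j ∧ p i j ≤ pmax)
    (hpmin : 0 < pmin)
    (r : ℕ) (C : Finset V) (hC : C.card = r) (hr2 : 2 ≤ r) (hrn : r < n)
    (m : ℝ) (hm1 : 1 ≤ m) (hmn : m < n)
    (hkey : (m - 1) * pmax * Real.log ((n : ℝ) / (r : ℝ)) <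
      ((r : ℝ) - 1) * pmin * Real.log ((n : ℝ) / m))
    (Dstar : Finset V) (hDC : Dstar ⊆ C) (hDne : Dstar.Nonempty)
    (hmax : ∀ D : Finset V, D ⊆ C → D.Nonempty →
      expCount p D / ((D.card : ℝ) * Real.log ((n : ℝ) / (D.card : ℝ))) ≤
        expCount p Dstar / ((Dstar.card : ℝ) * Real.log ((n : ℝ) / (Dstar.card : ℝ)))) :
    m < (Dstar.card : ℝ) := by
  classical
  by_contra hlt
  push_neg at hlt
  set d := Dstar.card with hdd
  have hd1 : 1 ≤ d := hDne.card_pos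
  have hdr : d ≤ r := hC ▸ Finset.card_le_card hDC
  have hdn : d < n := lt_of_le_of_lt hdr hrn
  have hCne : C.Nonempty := Finset.card_pos.mp (by omega)
  -- pmax ≥ pmin > 0
  have hpmax : 0 < pmax := by
    obtain ⟨i, hi, j, hj, hij⟩ := Finset.one_lt_card.mp (show 1 < C.card by omega)
    obtain ⟨h1, h2⟩ := hbound i j hij
    linarith
  have hdR : (1:ℝ) ≤ (d:ℝ) := by exact_mod_cast hd1
  have hrR : (2:ℝ) ≤ (r:ℝ) := by exact_mod_cast hr2
  have hdnR : (d:ℝ) < n := by exact_mod_cast hdn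
  have hrnR : (r:ℝ) < n := by exact_mod_cast hrn
  have hlogr : 0 < Real.log ((n:ℝ)/(r:ℝ)) :=
    Real.log_pos (by rw [lt_div_iff₀ (by linarith)]; linarith)
  have hlogd : 0 < Real.log ((n:ℝ)/(d:ℝ)) :=
    Real.log_pos (by rw [lt_div_iff₀ (by linarith)]; linarith)
  have hlogm : Real.log ((n:ℝ)/m) ≤ Real.log ((n:ℝ)/(d:ℝ)) := by
    apply Real.log_le_log (by positivity)
    apply div_le_div_of_nonneg_left (by linarith) (by linarith) hlt
  -- bounds on expCount
  have hA : (r:ℝ) * ((r:ℝ) - 1) * pmin / 2 ≤ expCount p C := by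
    have hsum : (C.offDiag.card) • pmin ≤ ∑ q ∈ C.offDiag, p q.1 q.2 := by
      apply Finset.card_nsmul_le_sum
      intro q hq
      exact (hbound q.1 q.2 (Finset.mem_offDiag.mp hq).2.2).1
    have hcard : (C.offDiag.card : ℝ) = (r:ℝ) * ((r:ℝ) - 1) := by
      rw [Finset.offDiag_card, hC, Nat.cast_sub (Nat.le_mul_of_pos_left r (by omega))]
      push_cast; ring
    rw [nsmul_eq_mul, hcard] at hsum
    unfold expCount
    linarith
  have hB : expCount p Dstar ≤ (d:ℝ) * ((d:ℝ) - 1) * pmax / 2 := by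
    have hsum : ∑ q ∈ Dstar.offDiag, p q.1 q.2 ≤ (Dstar.offDiag.card) • pmax := by
      apply Finset.sum_le_card_nsmul
      intro q hq
      exact (hbound q.1 q.2 (Finset.mem_offDiag.mp hq).2.2).2
    have hcard : (Dstar.offDiag.card : ℝ) = (d:ℝ) * ((d:ℝ) - 1) := by
      rw [Finset.offDiag_card, ← hdd, Nat.cast_sub (Nat.le_mul_of_pos_left d (by omega))]
      push_cast; ring
    rw [nsmul_eq_mul, hcard] at hsum
    unfold expCount
    linarith
  -- maximality applied to C
  have hAB := hmax C (Finset.Subset.refl C) hCne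
  rw [hC] at hAB
  have ha : 0 < (r:ℝ) * Real.log ((n:ℝ)/(r:ℝ)) := by positivity
  have hb : 0 < (d:ℝ) * Real.log ((n:ℝ)/(d:ℝ)) := by positivity
  rw [div_le_div_iff₀ ha hb] at hAB
  -- combine
  have key : ((r:ℝ) - 1) * pmin * Real.log ((n:ℝ)/(d:ℝ)) ≤
      ((d:ℝ) - 1) * pmax * Real.log ((n:ℝ)/(r:ℝ)) := by
    have h1 : (r:ℝ) * ((r:ℝ) - 1) * pmin / 2 * ((d:ℝ) * Real.log ((n:ℝ)/(d:ℝ))) ≤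
        expCount p C * ((d:ℝ) * Real.log ((n:ℝ)/(d:ℝ))) :=
      mul_le_mul_of_nonneg_right hA hb.le
    have h2 : expCount p Dstar * ((r:ℝ) * Real.log ((n:ℝ)/(r:ℝ))) ≤
        (d:ℝ) * ((d:ℝ) - 1) * pmax / 2 * ((r:ℝ) * Real.log ((n:ℝ)/(r:ℝ))) :=
      mul_le_mul_of_nonneg_right hB ha.le
    have h3 : (r:ℝ) * (((r:ℝ) - 1) * pmin * Real.log ((n:ℝ)/(d:ℝ))) * (d:ℝ) ≤
        (r:ℝ) * (((d:ℝ) - 1) * pmax * Real.log ((n:ℝ)/(r:ℝ))) * (d:ℝ) := by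
      nlinarith [h1, h2, hAB]
    have hr0 : (0:ℝ) < (r:ℝ) := by linarith
    have hd0 : (0:ℝ) < (d:ℝ) := by linarith
    nlinarith [mul_pos hr0 hd0]
  have step1 : ((r:ℝ) - 1) * pmin * Real.log ((n:ℝ)/m) ≤
      ((r:ℝ) - 1) * pmin * Real.log ((n:ℝ)/(d:ℝ)) := by
    apply mul_le_mul_of_nonneg_left hlogm
    exact mul_nonneg (by linarith) hpmin.le
  have step2 : ((d:ℝ) - 1) * pmax * Real.log ((n:ℝ)/(r:ℝ)) ≤
      (m - 1) * pmax * Real.log ((n:ℝ)/(r:ℝ)) := by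
    apply mul_le_mul_of_nonneg_right _ hlogr.le
    apply mul_le_mul_of_nonneg_right _ hpmax.le
    linarith
  linarith

end MostInformativeSubgraph
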